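/- arXiv:1907.03797 — 3 statements merged into one kernel-verified Lean document; each statement's English description precedes it below -/
import Mathlib

section
/- In a finite simple graph, if a vertex coloring has defect at most d (each vertex has at most d neighbors of its own color), then in a graph with neighborhood independence at most θ (every vertex's neighborhood contains no independent set of size more than θ), for every color x and every vertex v, the number of neighbors of v with color x is at most θ(d+1). -/
/-- In a graph with neighborhood independence at most θ, if a coloring has defect at most d,
then every vertex has at most θ(d+1) neighbors of any fixed color x. -/
theorem stmt_0 {V : Type*} [Fintype V] [DecidableEq V] (G : SimpleGraph V)
    [DecidableRel G.Adj] (c : V → ℕ) (d θ : ℕ)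
    (hdef : ∀ v : V, ((G.neighborFinset v).filter (fun u => c u = c v)).card ≤ d)
    (hθ : ∀ v : V, ∀ S : Finset V, S ⊆ G.neighborFinset v →
      (∀ u ∈ S, ∀ w ∈ S, u ≠ w → ¬ G.Adj u w) → S.card ≤ θ) :
    ∀ (x : ℕ) (v : V),
      ((G.neighborFinset v).filter (fun u => c u = x)).card ≤ θ * (d + 1) := by
  intro x v
  classical
  set T := (G.neighborFinset v).filter (fun u => c u = x) with hT
  -- family of independent subsets of T
  set 𝒮 := T.powerset.filter
    (fun S => ∀ u ∈ S, ∀ w ∈ S, u ≠ w → ¬ G.Adj u w) with h𝒮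
  have hne : 𝒮.Nonempty := ⟨∅, by simp [h𝒮]⟩
  obtain ⟨S, hS, hmax⟩ := 𝒮.exists_maximal hne
  have hSmem : S ∈ T.powerset.filter _ := hS
  rw [Finset.mem_filter, Finset.mem_powerset] at hSmem
  obtain ⟨hSsub, hSind⟩ := hSmem
  -- every t ∈ T is in S or adjacent to some s ∈ S
  have hcover : ∀ t ∈ T, t ∈ S ∨ ∃ s ∈ S, G.Adj s t := by
    intro t ht
    by_cases htS : t ∈ S
    · exact Or.inl htS
    · right
      by_contra hno
      push_neg at hno
      have hmem : insert t S ∈ 𝒮 := by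
        rw [h𝒮, Finset.mem_filter, Finset.mem_powerset]
        constructor
        · exact Finset.insert_subset ht hSsub
        · intro u hu w hw huw hadj
          rcases Finset.mem_insert.mp hu with hu' | hu' <;>
            rcases Finset.mem_insert.mp hw with hw' | hw'
          · exact huw (hu'.trans hw'.symm)
          · exact hno w hw' (hu' ▸ G.adj_symm hadj)
          · exact hno u hu' (hw' ▸ hadj)
          · exact hSind u hu' w hw' huw hadj
      exact htS (hmax hmem (Finset.subset_insert _ _) (Finset.mem_insert_self _ _))
  -- T is covered by closed neighborhoods of S restricted to color x
  have hsub : T ⊆ S.biUnion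
      (fun s => insert s ((G.neighborFinset s).filter (fun u => c u = c s))) := by
    intro t ht
    rcases hcover t ht with htS | ⟨s, hsS, hadj⟩
    · exact Finset.mem_biUnion.mpr ⟨t, htS, Finset.mem_insert_self _ _⟩
    · refine Finset.mem_biUnion.mpr ⟨s, hsS, Finset.mem_insert_of_mem ?_⟩
      rw [Finset.mem_filter, SimpleGraph.mem_neighborFinset]
      have hct : c t = x := (Finset.mem_filter.mp ht).2
      have hcs : c s = x := (Finset.mem_filter.mp (hSsub hsS)).2
      exact ⟨hadj, by rw [hct, hcs]⟩
  calc T.card ≤ _ := Finset.card_le_card hsub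
    _ ≤ ∑ s ∈ S, (insert s ((G.neighborFinset s).filter (fun u => c u = c s))).card :=
        Finset.card_biUnion_le
    _ ≤ ∑ s ∈ S, (d + 1) := by
        refine Finset.sum_le_sum fun s _ => ?_
        exact (Finset.card_insert_le _ _).trans (Nat.add_le_add_right (hdef s) 1)
    _ = S.card * (d + 1) := by rw [Finset.sum_const, smul_eq_mul]
    _ ≤ θ * (d + 1) := by
        have hST : S ⊆ G.neighborFinset v := hSsub.trans (Finset.filter_subset _ _)
        exact Nat.mul_le_mul_right _ (hθ v S hST hSind)
end

section
/- If the edges of a finite graph G can be oriented so that every vertex has out-degree at most k, then G has chromatic number at most 2k+1. -/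
open Finset

lemma min_deg_aux {V : Type*} [Fintype V] [Nonempty V] (G : SimpleGraph V) (k : ℕ)
    (o : V → V → Prop)
    (ho2 : ∀ u v, G.Adj u v → (o u v ∨ o v u))
    (hout : ∀ v, {w | o v w}.ncard ≤ k) :
    ∃ v, {w | G.Adj v w}.ncard ≤ 2 * k := by
  classical
  by_contra h
  push_neg at h
  have hcard : ∀ (p : V → Prop), {w | p w}.ncard = (univ.filter p).card := by
    intro p
    rw [Set.ncard_eq_toFinset_card']
    congr 1
    ext w; simp
  have key : ∀ v, (univ.filter (fun w => G.Adj v w)).card ≤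
      (univ.filter (fun w => o v w)).card + (univ.filter (fun w => o w v)).card := by
    intro v
    have : univ.filter (fun w => G.Adj v w) ⊆
        univ.filter (fun w => o v w) ∪ univ.filter (fun w => o w v) := by
      intro w hw
      simp only [mem_filter, mem_union, mem_univ, true_and] at *
      exact ho2 v w hw
    exact le_trans (Finset.card_le_card this) (Finset.card_union_le _ _)
  have hsum : ∑ v : V, (univ.filter (fun w => o w v)).card
      = ∑ v : V, (univ.filter (fun w => o v w)).card := by
    simp only [Finset.card_filter]
    rw [Finset.sum_comm]
  have h1 : ∑ v : V, (univ.filter (fun w => G.Adj v w)).card ≤ 2 * k * Fintype.card V := by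
    calc ∑ v : V, (univ.filter (fun w => G.Adj v w)).card
        ≤ ∑ v : V, ((univ.filter (fun w => o v w)).card + (univ.filter (fun w => o w v)).card) :=
          Finset.sum_le_sum fun v _ => key v
      _ = 2 * ∑ v : V, (univ.filter (fun w => o v w)).card := by
          rw [Finset.sum_add_distrib, hsum]; ring
      _ ≤ 2 * (k * Fintype.card V) := by
          gcongr
          calc ∑ v : V, (univ.filter (fun w => o v w)).card ≤ ∑ _v : V, k :=
                Finset.sum_le_sum fun v _ => by rw [← hcard]; exact hout v
            _ = k * Fintype.card V := by simp [mul_comm]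
      _ = 2 * k * Fintype.card V := by ring
  have h2 : (2 * k + 1) * Fintype.card V ≤ ∑ v : V, (univ.filter (fun w => G.Adj v w)).card := by
    calc (2 * k + 1) * Fintype.card V = ∑ _v : V, (2 * k + 1) := by simp [mul_comm]
      _ ≤ _ := Finset.sum_le_sum fun v _ => by
          have h3 : 2 * k < (univ.filter (fun w => G.Adj v w)).card := by
            rw [← hcard]; exact h v
          omega
  have hpos : 0 < Fintype.card V := Fintype.card_pos
  nlinarith [le_trans h2 h1]

universe u
lemma color_aux : ∀ (n : ℕ) (V : Type u) [Fintype V] (G : SimpleGraph V) (k : ℕ)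
    (o : V → V → Prop),
    (∀ u v, o u v → G.Adj u v) →
    (∀ u v, G.Adj u v → (o u v ∨ o v u)) →
    (∀ v, {w | o v w}.ncard ≤ k) →
    Fintype.card V ≤ n → G.Colorable (2 * k + 1) := by
  intro n
  induction n with
  | zero =>
    intro V _ G k o ho1 ho2 hout hcard
    have : IsEmpty V := by
      rw [← Fintype.card_eq_zero_iff]; omega
    exact SimpleGraph.Colorable.of_isEmpty _
  | succ n ih =>
    intro V _ G k o ho1 ho2 hout hcard
    classical
    cases isEmpty_or_nonempty V with
    | inl h => exact SimpleGraph.Colorable.of_isEmpty _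
    | inr h =>
      obtain ⟨v, hv⟩ := min_deg_aux G k o ho2 hout
      set V' := {u : V // u ≠ v}
      let G' : SimpleGraph V' := SimpleGraph.comap Subtype.val G
      let o' : V' → V' → Prop := fun a b => o a.1 b.1
      have hc' : G'.Colorable (2 * k + 1) := by
        apply ih V' G' k o'
        · intro a b hab; exact ho1 _ _ hab
        · intro a b hab; exact ho2 _ _ hab
        · intro a
          have hinj : Function.Injective (Subtype.val : V' → V) := Subtype.val_injective
          calc {w : V' | o' a w}.ncard
              = (Subtype.val '' {w : V' | o' a w}).ncard :=
                (Set.ncard_image_of_injective _ hinj).symm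
            _ ≤ {w : V | o a.1 w}.ncard := by
                apply Set.ncard_le_ncard
                · rintro x ⟨y, hy, rfl⟩; exact hy
                · exact Set.toFinite _
            _ ≤ k := hout a.1
        · have : Fintype.card V' < Fintype.card V :=
            Fintype.card_subtype_lt (x := v) (by simp)
          omega
      obtain ⟨C'⟩ := hc'
      -- colors used by neighbors of v
      let used : Finset (Fin (2 * k + 1)) :=
        (univ.filter (fun w : V' => G.Adj v w.1)).image C'
      have husedcard : used.card ≤ 2 * k := by
        calc used.card ≤ (univ.filter (fun w : V' => G.Adj v w.1)).card :=
              Finset.card_image_le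
          _ ≤ {w | G.Adj v w}.ncard := by
              rw [Set.ncard_eq_toFinset_card']
              apply Finset.card_le_card_of_injOn (fun w => w.1)
              · intro w hw; simp only [coe_filter, mem_filter, mem_univ, true_and, Set.mem_setOf_eq] at hw
                simp [hw]
              · intro a _ b _ hab; exact Subtype.val_injective hab
          _ ≤ 2 * k := hv
      have : ∃ c : Fin (2 * k + 1), c ∉ used := by
        by_contra hc
        push_neg at hc
        have : (univ : Finset (Fin (2 * k + 1))) ⊆ used := fun c _ => hc c
        have := Finset.card_le_card this
        simp at this
        omega
      obtain ⟨c, hc⟩ := this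
      refine ⟨⟨fun u => if h : u = v then c else C' ⟨u, h⟩, ?_⟩⟩
      intro a b hab
      have hne : a ≠ b := hab.ne
      by_cases ha : a = v
      · by_cases hb : b = v
        · exact absurd (ha.trans hb.symm) hne
        · simp only [dif_pos ha, dif_neg hb]
          intro heq
          apply hc
          rw [heq]
          refine Finset.mem_image_of_mem C' ?_
          simp only [mem_filter, mem_univ, true_and]
          exact ha ▸ hab
      · by_cases hb : b = v
        · simp only [dif_neg ha, dif_pos hb]
          intro heq
          apply hc
          rw [← heq]
          refine Finset.mem_image_of_mem C' ?_
          simp only [mem_filter, mem_univ, true_and]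
          exact hb ▸ hab.symm
        · simp only [dif_neg ha, dif_neg hb]
          exact C'.valid (show G'.Adj ⟨a, ha⟩ ⟨b, hb⟩ from hab)

/-- If the edges of G can be oriented so that every vertex has out-degree at most k,
then G has chromatic number at most 2k+1. -/
theorem stmt_6 {V : Type*} [Fintype V] (G : SimpleGraph V) (k : ℕ)
    (o : V → V → Prop)
    (ho1 : ∀ u v, o u v → G.Adj u v)
    (ho2 : ∀ u v, G.Adj u v → (o u v ∨ o v u))
    (ho3 : ∀ u v, o u v → ¬ o v u)
    (hout : ∀ v, {w | o v w}.ncard ≤ k) :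
    G.chromaticNumber ≤ (2 * k + 1 : ℕ) := by
  exact (color_aux (Fintype.card V) V G k o ho1 ho2 hout le_rfl).chromaticNumber_le
end

section
/- If every subgraph of a finite graph G on k vertices has at most a(k−1) edges, then G admits an acyclic edge orientation in which every vertex has out-degree at most 2a−1. -/
open scoped Classical in
theorem handshake_sub {V : Type*} [Fintype V] [DecidableEq V] (G : SimpleGraph V)
    [DecidableRel G.Adj] (S : Finset V) :
    ∑ v ∈ S, (S.filter (G.Adj v)).card
      = 2 * (G.edgeFinset.filter (fun e => ∀ x ∈ e, x ∈ S)).card := by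
  classical
  set P : Finset (V × V) := (S ×ˢ S).filter (fun p => G.Adj p.1 p.2) with hP
  set F := G.edgeFinset.filter (fun e => ∀ x ∈ e, x ∈ S) with hF
  have h1 : P.card = ∑ v ∈ S, (S.filter (G.Adj v)).card := by
    rw [Finset.card_eq_sum_card_fiberwise (f := Prod.fst) (t := S)
      (fun p hp => by simp [hP, Finset.mem_product] at hp; exact hp.1.1)]
    refine Finset.sum_congr rfl fun v hv => ?_
    refine Finset.card_bij (fun p _ => p.2) ?_ ?_ ?_
    · intro p hp
      simp [hP, Finset.mem_product] at hp
      simp [hp.1.1.2, ← hp.2, hp.1.2]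
    · intro p hp q hq h
      simp [hP] at hp hq
      exact Prod.ext (hp.2.trans hq.2.symm) h
    · intro w hw
      simp at hw
      exact ⟨(v, w), by simp [hP, Finset.mem_product, hv, hw.1, hw.2], rfl⟩
  have h2 : P.card = ∑ e ∈ F, 2 := by
    rw [Finset.card_eq_sum_card_fiberwise (f := fun (p : V × V) => Sym2.mk p.1 p.2) (t := F)
      (fun p hp => by
        simp [hP, Finset.mem_product] at hp
        simp [hF, SimpleGraph.mem_edgeFinset, SimpleGraph.mem_edgeSet]
        exact ⟨hp.2, hp.1.1, hp.1.2⟩)]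
    refine Finset.sum_congr rfl fun e he => ?_
    induction e using Sym2.ind with
    | _ x y =>
      simp [hF, SimpleGraph.mem_edgeFinset, SimpleGraph.mem_edgeSet] at he
      obtain ⟨hadj, hmem⟩ := he
      have hx : x ∈ S := hmem.1
      have hy : y ∈ S := hmem.2
      have hxy : x ≠ y := hadj.ne
      have : P.filter (fun p => Sym2.mk p.1 p.2 = s(x, y)) = {(x, y), (y, x)} := by
        ext p
        simp only [Finset.mem_filter, hP, Finset.mem_product, Finset.mem_insert,
          Finset.mem_singleton]
        constructor
        · rintro ⟨⟨-, -⟩, h⟩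
          rcases Sym2.eq_iff.mp h with ⟨h1, h2⟩ | ⟨h1, h2⟩
          · left; exact Prod.ext h1 h2
          · right; exact Prod.ext h1 h2
        · rintro (rfl | rfl)
          · exact ⟨⟨⟨hx, hy⟩, hadj⟩, rfl⟩
          · exact ⟨⟨⟨hy, hx⟩, hadj.symm⟩, Sym2.eq_swap⟩
      rw [this, Finset.card_insert_of_notMem (by simp [hxy]), Finset.card_singleton]
  rw [← h1, h2, Finset.sum_const, smul_eq_mul, mul_comm]

open scoped Classical in
theorem mindeg_sub {V : Type*} [Fintype V] [DecidableEq V] (G : SimpleGraph V)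
    [DecidableRel G.Adj] (a : ℕ) (ha : 1 ≤ a)
    (hdens : ∀ S : Finset V, S.Nonempty →
      (G.edgeFinset.filter (fun e => ∀ x ∈ e, x ∈ S)).card ≤ a * (S.card - 1))
    (S : Finset V) (hS : S.Nonempty) :
    ∃ v ∈ S, (S.filter (G.Adj v)).card ≤ 2 * a - 1 := by
  by_contra h
  push_neg at h
  have hsum : 2 * a * S.card ≤ ∑ v ∈ S, (S.filter (G.Adj v)).card := by
    calc 2 * a * S.card = ∑ _v ∈ S, 2 * a := by rw [Finset.sum_const, smul_eq_mul, mul_comm]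
    _ ≤ _ := Finset.sum_le_sum fun v hv => by have := h v hv; omega
  rw [handshake_sub] at hsum
  have hd := hdens S hS
  have hc : 1 ≤ S.card := hS.card_pos
  have : 2 * (G.edgeFinset.filter (fun e => ∀ x ∈ e, x ∈ S)).card ≤ 2 * (a * (S.card - 1)) := by
    omega
  have h4 : 2 * a * S.card = 2 * (a * S.card) := by ring
  have h3 : a * (S.card - 1) + a = a * S.card := by
    calc a * (S.card - 1) + a = a * ((S.card - 1) + 1) := by ring
    _ = a * S.card := by rw [Nat.sub_add_cancel hc]
  omega

open scoped Classical in
theorem degen_order {V : Type*} [Fintype V] [DecidableEq V] (G : SimpleGraph V)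
    [DecidableRel G.Adj] (a : ℕ) (ha : 1 ≤ a)
    (hdens : ∀ S : Finset V, S.Nonempty →
      (G.edgeFinset.filter (fun e => ∀ x ∈ e, x ∈ S)).card ≤ a * (S.card - 1))
    (S : Finset V) :
    ∃ r : V → ℕ, (∀ u ∈ S, ∀ w ∈ S, r u = r w → u = w) ∧
      ∀ v ∈ S, (S.filter (fun w => G.Adj v w ∧ r v < r w)).card ≤ 2 * a - 1 := by
  induction S using Finset.strongInduction with
  | _ S ih =>
    rcases S.eq_empty_or_nonempty with rfl | hS
    · exact ⟨fun _ => 0, by simp, by simp⟩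
    obtain ⟨v, hv, hvdeg⟩ := mindeg_sub G a ha hdens S hS
    obtain ⟨r, hinj, hdeg⟩ := ih (S.erase v) (Finset.erase_ssubset hv)
    refine ⟨fun w => if w = v then 0 else r w + 1, ?_, ?_⟩
    · intro u hu w hw h
      by_cases hu' : u = v
      · by_cases hw' : w = v
        · rw [hu', hw']
        · simp [hu', hw'] at h
      · by_cases hw' : w = v
        · simp [hu', hw'] at h
        · simp [hu', hw'] at h
          exact hinj u (Finset.mem_erase.mpr ⟨hu', hu⟩) w (Finset.mem_erase.mpr ⟨hw', hw⟩) h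
    · intro v' hv'
      by_cases hv'' : v' = v
      · subst hv''
        calc (S.filter fun w => G.Adj v' w ∧ _ < _).card
            ≤ (S.filter (G.Adj v')).card :=
              Finset.card_le_card (by
                intro w hw
                simp only [Finset.mem_filter] at hw ⊢
                exact ⟨hw.1, hw.2.1⟩)
          _ ≤ 2 * a - 1 := hvdeg
      · have key : (S.filter fun w => G.Adj v' w ∧
            (if v' = v then 0 else r v' + 1) < (if w = v then 0 else r w + 1))
            = (S.erase v).filter fun w => G.Adj v' w ∧ r v' < r w := by
          ext w
          simp only [Finset.mem_filter, Finset.mem_erase, hv'', if_false]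
          by_cases hw : w = v
          · simp [hw]
          · simp [hw, Nat.add_lt_add_iff_right]
        beta_reduce
        rw [key]
        exact hdeg v' (Finset.mem_erase.mpr ⟨hv'', hv'⟩)

open scoped Classical in
/-- Under the Nash-Williams density condition (every vertex subset S spans at most
a(|S|-1) edges), G admits an acyclic edge orientation with out-degree at most 2a-1. -/
theorem stmt_9 {V : Type*} [Fintype V] [DecidableEq V] (G : SimpleGraph V)
    [DecidableRel G.Adj] (a : ℕ) (ha : 1 ≤ a)
    (hdens : ∀ S : Finset V, S.Nonempty →
      (G.edgeFinset.filter (fun e => ∀ x ∈ e, x ∈ S)).card ≤ a * (S.card - 1)) :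
    ∃ o : V → V → Prop,
      (∀ u v, o u v → G.Adj u v) ∧
      (∀ u v, G.Adj u v → (o u v ∨ o v u)) ∧
      (∀ u v, o u v → ¬ o v u) ∧
      (∀ v, ¬ Relation.TransGen o v v) ∧
      (∀ v, {w | o v w}.ncard ≤ 2 * a - 1) := by
  obtain ⟨r, hinj, hdeg⟩ := degen_order G a ha hdens Finset.univ
  refine ⟨fun u v => G.Adj u v ∧ r u < r v, fun u v h => h.1, ?_, ?_, ?_, ?_⟩
  · intro u v huv
    rcases lt_trichotomy (r u) (r v) with h | h | h
    · exact Or.inl ⟨huv, h⟩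
    · exact absurd (hinj u (Finset.mem_univ u) v (Finset.mem_univ v) h) huv.ne
    · exact Or.inr ⟨huv.symm, h⟩
  · intro u v h hvu
    exact absurd (h.2.trans hvu.2) (lt_irrefl _)
  · intro v h
    have key : ∀ x y, Relation.TransGen (fun u v => G.Adj u v ∧ r u < r v) x y → r x < r y := by
      intro x y h
      induction h with
      | single h => exact h.2
      | tail _ h ih => exact ih.trans h.2
    exact absurd (key v v h) (lt_irrefl _)
  · intro v
    have hset : {w | G.Adj v w ∧ r v < r w}
        = ↑(Finset.univ.filter fun w => G.Adj v w ∧ r v < r w) := by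
      ext w; simp
    show ({w | G.Adj v w ∧ r v < r w}).ncard ≤ 2 * a - 1
    rw [hset, Set.ncard_coe_finset]
    exact hdeg v (Finset.mem_univ v)
end
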